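/- Let n be a natural number, G = (Fin n → ZMod 2), R = AddMonoidAlgebra (ZMod 2) G, and I ⊆ R the augmentation ideal. Then I^k = 0 for every k > n; in particular I^(n+1) = 0. -/

import Mathlib

open AddMonoidAlgebra

/-- The augmentation homomorphism of the group algebra of `(ZMod 2)^n` over `ZMod 2`:
the algebra homomorphism sending each basis element `[g]` to `1`. -/
noncomputable def aug (n : ℕ) :
    AddMonoidAlgebra (ZMod 2) (Fin n → ZMod 2) →ₐ[ZMod 2] ZMod 2 :=
  AddMonoidAlgebra.lift (ZMod 2) (ZMod 2) (Fin n → ZMod 2) 1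

/-- The augmentation ideal, i.e. the kernel of the augmentation homomorphism. -/
noncomputable def augIdeal (n : ℕ) : Ideal (AddMonoidAlgebra (ZMod 2) (Fin n → ZMod 2)) :=
  RingHom.ker (aug n)

/-- The generators `[eᵢ] - 1` of the augmentation ideal. -/
noncomputable def gen (n : ℕ) (i : Fin n) : AddMonoidAlgebra (ZMod 2) (Fin n → ZMod 2) :=
  single (Pi.single i 1 : Fin n → ZMod 2) 1 - 1

lemma aug_single (n : ℕ) (g : Fin n → ZMod 2) (c : ZMod 2) : aug n (single g c) = c := by
  simp [aug, AddMonoidAlgebra.lift_single]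

lemma add_self_R (n : ℕ) (y : AddMonoidAlgebra (ZMod 2) (Fin n → ZMod 2)) : y + y = 0 := by
  rw [← two_smul (ZMod 2) y]
  have : (2 : ZMod 2) = 0 := by decide
  rw [this, zero_smul]

lemma gen_sq (n : ℕ) (i : Fin n) : gen n i * gen n i = 0 := by
  have h2 : ∀ x : ZMod 2, x + x = 0 := by decide
  set x : AddMonoidAlgebra (ZMod 2) (Fin n → ZMod 2) :=
    single (Pi.single i 1 : Fin n → ZMod 2) 1 with hxdef
  have hsum : (Pi.single i 1 : Fin n → ZMod 2) + Pi.single i 1 = 0 := by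
    funext j; exact h2 _
  have hx : x * x = 1 := by
    rw [hxdef, single_mul_single, hsum, one_mul, AddMonoidAlgebra.one_def]
  have key : gen n i * gen n i = x * x + 1 - (x + x) := by unfold gen; rw [← hxdef]; ring
  rw [key, hx, add_self_R n x, sub_zero, add_self_R]

lemma single_sub_one_mem (n : ℕ) (g : Fin n → ZMod 2) :
    single g (1:ZMod 2) - 1 ∈ Ideal.span (Set.range (gen n)) := by
  set J := Ideal.span (Set.range (gen n)) with hJ
  let S : AddSubmonoid (Fin n → ZMod 2) :=
    { carrier := {g | single g (1:ZMod 2) - 1 ∈ J}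
      zero_mem' := by simp [← AddMonoidAlgebra.one_def]
      add_mem' := by
        intro x y hx hy
        have hmul : single x (1:ZMod 2) * single y 1 = single (x + y) 1 := by
          rw [single_mul_single, one_mul]
        have key : single (x + y) (1:ZMod 2) - 1
            = (single x 1 - 1) * single y 1 + (single y 1 - 1) := by
          rw [← hmul]; ring
        simp only [Set.mem_setOf_eq] at *
        rw [key]
        exact J.add_mem (J.mul_mem_right _ hx) hy }
  have hg : g ∈ S := by
    have hrep : g = ∑ i, Pi.single i (g i) := (Finset.univ_sum_single g).symm
    rw [hrep]
    refine AddSubmonoid.sum_mem S (fun i _ => ?_)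
    have h01 : ∀ x : ZMod 2, x = 0 ∨ x = 1 := by decide
    rcases h01 (g i) with h | h <;> rw [h]
    · rw [Pi.single_zero]; exact S.zero_mem
    · show single (Pi.single i 1 : Fin n → ZMod 2) (1:ZMod 2) - 1 ∈ J
      exact Ideal.subset_span ⟨i, rfl⟩
  exact hg

lemma augIdeal_eq_span (n : ℕ) : augIdeal n = Ideal.span (Set.range (gen n)) := by
  apply le_antisymm
  · intro x hx
    have hker : aug n x = 0 := hx
    have h01 : ∀ c : ZMod 2, c = 0 ∨ c = 1 := by decide
    have hrep : x = ∑ g ∈ x.coeff.support, single g (x.coeff g) := (sum_coeff_single x).symm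
    have haug : aug n x = ∑ g ∈ x.coeff.support, x.coeff g := by
      conv_lhs => rw [hrep]
      rw [map_sum]
      exact Finset.sum_congr rfl (fun g _ => aug_single n g (x.coeff g))
    have key : (∑ g ∈ x.coeff.support, (x.coeff g) • (single g (1:ZMod 2) - 1)) = x := by
      simp only [smul_sub, Finset.sum_sub_distrib, AddMonoidAlgebra.smul_single', mul_one,
        ← Finset.sum_smul, ← haug, hker, zero_smul, sub_zero]
      exact hrep.symm
    rw [← key]
    refine Ideal.sum_mem _ (fun g _ => ?_)
    rcases h01 (x.coeff g) with h | h <;> rw [h]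
    · rw [zero_smul]; exact Ideal.zero_mem _
    · rw [one_smul]; exact single_sub_one_mem n g
  · rw [Ideal.span_le]
    rintro _ ⟨i, rfl⟩
    show aug n (gen n i) = 0
    unfold gen
    rw [map_sub, aug_single, map_one, sub_self]

/-- `I ^ k = 0` for every `k > n`; in particular `I ^ (n + 1) = 0`. -/
theorem augIdeal_pow_eq_bot (n : ℕ) :
    (∀ k : ℕ, n < k → (augIdeal n) ^ k = ⊥) ∧ (augIdeal n) ^ (n + 1) = ⊥ := by
  have main : (augIdeal n) ^ (n + 1) = ⊥ := by
    rw [augIdeal_eq_span]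
    show Submodule.span _ (Set.range (gen n)) ^ (n + 1) = ⊥
    rw [Submodule.span_pow, eq_bot_iff, Submodule.span_le]
    intro z hz
    rw [Set.mem_pow] at hz
    obtain ⟨f, hf⟩ := hz
    choose j hj using fun i => (f i).2
    have hzz : z = ∏ i, gen n (j i) := by
      rw [← hf, List.prod_ofFn]
      exact Finset.prod_congr rfl (fun i _ => (hj i).symm)
    obtain ⟨i₁, i₂, hne, heq⟩ := Fintype.exists_ne_map_eq_of_card_lt j (by simp)
    have hz0 : z = 0 := by
      rw [hzz, ← Finset.mul_prod_erase Finset.univ _ (Finset.mem_univ i₁),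
        ← Finset.mul_prod_erase _ _ (Finset.mem_erase.2 ⟨hne.symm, Finset.mem_univ i₂⟩),
        ← mul_assoc, heq, gen_sq, zero_mul]
    simp [hz0]
  refine ⟨fun k hk => ?_, main⟩
  rw [eq_bot_iff, ← main]
  exact Ideal.pow_le_pow_right hk
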